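/- Let μ, k > 0 with μ² < 2k², and let λ̃ ∈ ℂ with |λ̃| = 1 and Re λ̃ ≥ 0. Then the quartic polynomial z⁴ − (2μ/k²)λ̃z² + (2/k²)λ̃² has four pairwise distinct complex roots, none of which is purely imaginary, and exactly two of them have strictly positive real part while the other two have strictly negative real part. -/

import Mathlib

open Polynomial

lemma aux_sqrt (w : ℂ) (hw : ¬(w.im = 0 ∧ w.re ≤ 0)) : ∃ z : ℂ, z ^ 2 = w ∧ 0 < z.re := by
  obtain ⟨u, hu⟩ : ∃ u : ℂ, u ^ 2 = w := by
    refine ⟨w ^ ((2:ℕ):ℂ)⁻¹, ?_⟩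
    exact Complex.cpow_nat_inv_pow w (by norm_num)
  have hre : u.re ≠ 0 := by
    intro h
    apply hw
    constructor
    · rw [← hu]; simp [pow_two, Complex.mul_im, h]
    · rw [← hu]; simp [pow_two, Complex.mul_re, h]
      nlinarith [sq_nonneg u.im]
  rcases lt_or_gt_of_ne hre with h | h
  · exact ⟨-u, by rw [neg_pow]; simp [hu], by simpa using h⟩
  · exact ⟨u, hu, h⟩

theorem stmt_18 (μ k : ℝ) (hμ : 0 < μ) (hk : 0 < k) (hμk : μ ^ 2 < 2 * k ^ 2)
    (lam : ℂ) (hlam : ‖lam‖ = 1) (hre : 0 ≤ lam.re) :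
    ∃ z₁ z₂ z₃ z₄ : ℂ,
      z₁ ≠ z₂ ∧ z₁ ≠ z₃ ∧ z₁ ≠ z₄ ∧ z₂ ≠ z₃ ∧ z₂ ≠ z₄ ∧ z₃ ≠ z₄ ∧
      (X ^ 4 - C (((2 * μ / k ^ 2 : ℝ) : ℂ) * lam) * X ^ 2
          + C (((2 / k ^ 2 : ℝ) : ℂ) * lam ^ 2)).roots = {z₁, z₂, z₃, z₄} ∧
      z₁.re ≠ 0 ∧ z₂.re ≠ 0 ∧ z₃.re ≠ 0 ∧ z₄.re ≠ 0 ∧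
      0 < z₁.re ∧ 0 < z₂.re ∧ z₃.re < 0 ∧ z₄.re < 0 := by
  set x := lam.re with hx
  set y := lam.im with hy
  have hnorm : x ^ 2 + y ^ 2 = 1 := by
    have h2 : Complex.normSq lam = 1 := by
      rw [← Complex.sq_norm, hlam]; norm_num
    simpa [Complex.normSq_apply, pow_two] using h2
  set s := Real.sqrt (2 * k ^ 2 - μ ^ 2) with hsdef
  have hs2 : s ^ 2 = 2 * k ^ 2 - μ ^ 2 := Real.sq_sqrt (by linarith)
  have hs0 : 0 < s := Real.sqrt_pos.mpr (by linarith)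
  have hk2 : (0:ℝ) < k ^ 2 := by positivity
  have hkc : ((k:ℂ)) ^ 2 ≠ 0 := by
    simpa using pow_ne_zero 2 (Complex.ofReal_ne_zero.mpr hk.ne')
  have hlam0 : lam ≠ 0 := by
    intro h; rw [h] at hlam; simp at hlam
  set wp : ℂ := lam * ((μ:ℂ) + (s:ℂ) * Complex.I) / (k:ℂ) ^ 2 with hwp
  set wm : ℂ := lam * ((μ:ℂ) - (s:ℂ) * Complex.I) / (k:ℂ) ^ 2 with hwm
  have hkcast : ((k:ℂ))^2 = ((k^2 : ℝ) : ℂ) := by push_cast; ring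
  have hdiv : ∀ z : ℂ, (z / ((k:ℂ))^2).re = z.re / k^2 ∧ (z / ((k:ℂ))^2).im = z.im / k^2 := by
    intro z
    rw [hkcast]
    constructor
    · rw [Complex.div_ofReal_re]
    · rw [Complex.div_ofReal_im]
  have hwp_re : wp.re = (x * μ - y * s) / k ^ 2 := by
    rw [hwp, (hdiv _).1]
    simp [Complex.mul_re]
    rfl
  have hwp_im : wp.im = (x * s + y * μ) / k ^ 2 := by
    rw [hwp, (hdiv _).2]
    simp [Complex.mul_im]
    rfl
  have hwm_re : wm.re = (x * μ + y * s) / k ^ 2 := by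
    rw [hwm, (hdiv _).1]
    simp [Complex.mul_re, Complex.sub_re, Complex.sub_im]
    rfl
  have hwm_im : wm.im = (-(x * s) + y * μ) / k ^ 2 := by
    rw [hwm, (hdiv _).2]
    simp [Complex.mul_im, Complex.sub_re, Complex.sub_im]
    rfl
  have hwp_ok : ¬(wp.im = 0 ∧ wp.re ≤ 0) := by
    rintro ⟨h1, h2⟩
    rw [hwp_im, _root_.div_eq_zero_iff] at h1
    rw [hwp_re, div_nonpos_iff] at h2
    have h1' : x * s + y * μ = 0 := by
      rcases h1 with h | h; exact h; linarith
    have h2' : x * μ - y * s ≤ 0 := by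
      rcases h2 with ⟨_, h⟩ | ⟨h, _⟩; linarith; exact h
    have hx0 : x = 0 := by nlinarith
    have hy0 : y = 0 := by
      have : y * μ = 0 := by rw [hx0] at h1'; linarith
      exact (mul_eq_zero.mp this).resolve_right hμ.ne'
    rw [hx0, hy0] at hnorm; norm_num at hnorm
  have hwm_ok : ¬(wm.im = 0 ∧ wm.re ≤ 0) := by
    rintro ⟨h1, h2⟩
    rw [hwm_im, _root_.div_eq_zero_iff] at h1
    rw [hwm_re, div_nonpos_iff] at h2
    have h1' : -(x * s) + y * μ = 0 := by
      rcases h1 with h | h; exact h; linarith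
    have h2' : x * μ + y * s ≤ 0 := by
      rcases h2 with ⟨_, h⟩ | ⟨h, _⟩; linarith; exact h
    have hx0 : x = 0 := by nlinarith
    have hy0 : y = 0 := by
      have : y * μ = 0 := by rw [hx0] at h1'; linarith
      exact (mul_eq_zero.mp this).resolve_right hμ.ne'
    rw [hx0, hy0] at hnorm; norm_num at hnorm
  obtain ⟨z₁, hz1, hz1re⟩ := aux_sqrt wp hwp_ok
  obtain ⟨z₂, hz2, hz2re⟩ := aux_sqrt wm hwm_ok
  have hwpm : wp ≠ wm := by
    intro h
    rw [hwp, hwm, div_eq_div_iff hkc hkc] at h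
    have : lam * ((s:ℂ) * Complex.I) = 0 := by
      have := mul_right_cancel₀ hkc h
      linear_combination this / 2
    rcases mul_eq_zero.mp this with h | h
    · exact hlam0 h
    · rcases mul_eq_zero.mp h with h | h
      · exact hs0.ne' (by exact_mod_cast h)
      · exact Complex.I_ne_zero h
  have hne12 : z₁ ≠ z₂ := fun h => hwpm (by rw [← hz1, ← hz2, h])
  have hne1n2 : z₁ ≠ -z₂ := fun h => hwpm (by rw [← hz1, ← hz2, h, neg_pow]; simp)
  have hne1n1 : z₁ ≠ -z₁ := fun h => by
    have h' : z₁.re = (-z₁).re := congrArg Complex.re h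
    rw [Complex.neg_re] at h'; linarith
  have hne2n2 : z₂ ≠ -z₂ := fun h => by
    have h' : z₂.re = (-z₂).re := congrArg Complex.re h
    rw [Complex.neg_re] at h'; linarith
  have hne2n1 : z₂ ≠ -z₁ := fun h => hwpm (by rw [← hz1, ← hz2, h, neg_pow]; simp)
  have hnen1n2 : (-z₁) ≠ -z₂ := fun h => hne12 (neg_injective h)
  refine ⟨z₁, z₂, -z₁, -z₂, hne12, hne1n1, hne1n2, (fun h => hne2n1 h), hne2n2, hnen1n2, ?_,
    hz1re.ne', hz2re.ne', by simp [hz1re.ne'], by simp [hz2re.ne'], hz1re, hz2re,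
    by simpa using hz1re, by simpa using hz2re⟩
  have hsum : (((2 * μ / k ^ 2 : ℝ) : ℂ)) * lam = z₁ ^ 2 + z₂ ^ 2 := by
    rw [hz1, hz2, hwp, hwm]
    push_cast
    field_simp
    ring
  have hs2c : ((s:ℂ)) ^ 2 = 2 * (k:ℂ) ^ 2 - (μ:ℂ) ^ 2 := by
    exact_mod_cast congrArg (Complex.ofReal) hs2
  have hprod : (((2 / k ^ 2 : ℝ) : ℂ)) * lam ^ 2 = z₁ ^ 2 * z₂ ^ 2 := by
    rw [hz1, hz2, hwp, hwm]
    push_cast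
    have hk0 : (k:ℂ) ≠ 0 := Complex.ofReal_ne_zero.mpr hk.ne'
    field_simp
    linear_combination (-1 : ℂ) * hs2c
      + ((s:ℂ) ^ 2) * Complex.I_sq
  have hpoly : (X ^ 4 - C (((2 * μ / k ^ 2 : ℝ) : ℂ) * lam) * X ^ 2
          + C (((2 / k ^ 2 : ℝ) : ℂ) * lam ^ 2))
      = (Multiset.map (fun a => X - C a) ({z₁, z₂, -z₁, -z₂} : Multiset ℂ)).prod := by
    rw [hsum, hprod]
    simp only [Multiset.insert_eq_cons, Multiset.map_cons, Multiset.map_singleton,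
      Multiset.prod_cons, Multiset.prod_singleton, map_add, map_mul, map_pow, map_neg]
    ring
  rw [hpoly, Polynomial.roots_multiset_prod_X_sub_C]
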